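/- Let k ≥ 1 and L ≥ 1 be integers, m > 0, μ > 0, a > 0, b > 0, p > 0, N₀ > 0 and γ > 0. Let X and Z be independent real random variables on a probability space, where X has the Gamma (Erlang) distribution with integer shape k and scale m, and Z has the Gamma (Erlang) distribution with integer shape L and scale μ (i.e. Z is distributed as the sum of L i.i.d. exponentials with mean μ, modelling co-located primary transmit antennas). Set u = γ·p/(a·m) and v = (γ·N₀ + b)/(a·m). Then Pr[ (aX − b)⁺ < γ·(p·Z + N₀) ] = 1 − exp(−v) · Σ_{l=0}^{k−1} Σ_{s=0}^{l} binom(l, s) · (s+L−1)! · v^{l−s} · u^s / ( l! · (L−1)! · μ^L · (u + 1/μ)^{s+L} ). -/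

import Mathlib

open MeasureTheory ProbabilityTheory Finset
open scoped ProbabilityTheory

lemma integrableOn_pow_mul_exp_neg_mul {c : ℝ} (hc : 0 < c) (n : ℕ) :
    IntegrableOn (fun t : ℝ => t ^ n * Real.exp (-(c * t))) (Set.Ioi (0:ℝ)) := by
  have h : IntegrableOn (fun x : ℝ => Real.exp (-x) * x ^ ((n+1:ℝ) - 1)) (Set.Ioi 0) :=
    Real.GammaIntegral_convergent (by positivity)
  have h2 : IntegrableOn (fun t : ℝ => Real.exp (-(c*t)) * (c*t) ^ ((n+1:ℝ) - 1)) (Set.Ioi 0) := by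
    have := (integrableOn_Ioi_comp_mul_left_iff
      (fun x : ℝ => Real.exp (-x) * x ^ ((n+1:ℝ) - 1)) 0 hc).mpr (by simpa using h)
    simpa using this
  have h3 := h2.const_mul ((c:ℝ) ^ n)⁻¹
  apply (IntegrableOn.congr_fun h3 ?_ measurableSet_Ioi)
  intro t ht
  have ht' : (0:ℝ) < t := ht
  have hn : ((n+1:ℝ) - 1) = (n:ℝ) := by ring
  simp only [hn]
  rw [Real.rpow_natCast]
  field_simp [mul_pow]
  ring

lemma integral_pow_mul_exp_neg_mul {c : ℝ} (hc : 0 < c) (n : ℕ) :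
    ∫ t in Set.Ioi (0:ℝ), t ^ n * Real.exp (-(c * t)) = n.factorial / c ^ (n+1) := by
  have h := Real.integral_rpow_mul_exp_neg_mul_Ioi (a := (n+1:ℝ)) (by positivity) hc
  have hg : Real.Gamma ((n:ℝ)+1) = n.factorial := Real.Gamma_nat_eq_factorial n
  rw [show ((n:ℝ)+1) - 1 = (n:ℝ) by ring] at h
  have hc' : ∫ t in Set.Ioi (0:ℝ), t ^ n * Real.exp (-(c * t))
      = ∫ t in Set.Ioi (0:ℝ), t ^ ((n:ℝ)) * Real.exp (-(c * t)) := by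
    refine setIntegral_congr_fun measurableSet_Ioi (fun t ht => ?_)
    rw [Real.rpow_natCast]
  rw [hc', h, hg]
  rw [show ((n:ℝ)+1) = ((n+1 : ℕ):ℝ) by push_cast; ring, Real.rpow_natCast]
  field_simp
  rw [← mul_pow, one_div, inv_mul_cancel₀ hc.ne', one_pow]

lemma gammaPDFReal_nat {n : ℕ} (r t : ℝ) (ht : 0 ≤ t) :
    gammaPDFReal (((n+1:ℕ):ℝ)) r t = r^(n+1) / n.factorial * t^n * Real.exp (-(r*t)) := by
  rw [gammaPDFReal, if_pos ht]
  have h1 : ((n+1:ℕ):ℝ) - 1 = ((n:ℕ):ℝ) := by push_cast; ring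
  have h2 : Real.Gamma ((n+1:ℕ):ℝ) = n.factorial := by
    exact_mod_cast Real.Gamma_nat_eq_factorial n
  rw [h1, h2, Real.rpow_natCast, Real.rpow_natCast]

lemma erlang_F_hasDerivAt {n : ℕ} {m : ℝ} (hm : 0 < m) (t : ℝ) :
    HasDerivAt (fun t : ℝ => -(Real.exp (-(t/m)) * ∑ l ∈ range (n+1), (t/m)^l / l.factorial))
      ((m⁻¹)^(n+1) / n.factorial * t^n * Real.exp (-(t/m))) t := by
  have hE : HasDerivAt (fun t : ℝ => Real.exp (-(t/m))) (Real.exp (-(t/m)) * (-(1/m))) t := by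
    simpa using (((hasDerivAt_id t).div_const m).neg).exp
  have hS : HasDerivAt (fun t : ℝ => ∑ l ∈ range (n+1), (t/m)^l / l.factorial)
      (∑ l ∈ range (n+1), ((l : ℝ) * (t/m)^(l-1) * (1/m)) / l.factorial) t := by
    apply HasDerivAt.fun_sum
    intro l _
    exact (((hasDerivAt_id t).div_const m).pow l).div_const _
  have hsum : (∑ l ∈ range (n+1), ((l : ℝ) * (t/m)^(l-1) * (1/m)) / l.factorial)
      = (1/m) * ∑ l ∈ range n, (t/m)^l / l.factorial := by
    rw [Finset.sum_range_succ', Finset.mul_sum]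
    simp only [Nat.cast_zero, zero_mul, zero_div, add_zero, Nat.add_sub_cancel]
    refine Finset.sum_congr rfl (fun i _ => ?_)
    rw [Nat.factorial_succ]
    have h1 : ((i:ℝ)+1) ≠ 0 := by positivity
    have h2 : (i.factorial : ℝ) ≠ 0 := by positivity
    push_cast
    field_simp
  have := (hE.fun_mul hS).fun_neg
  rw [hsum] at this
  refine this.congr_deriv ?_
  rw [Finset.sum_range_succ]
  have h2 : (n.factorial : ℝ) ≠ 0 := by positivity
  simp only [inv_pow]
  field_simp
  have hmn : m ^ n * m⁻¹ ^ n = 1 := by rw [← mul_pow, mul_inv_cancel₀ hm.ne', one_pow]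
  linear_combination (t ^ n * m) * hmn

lemma gammaMeasure_Iio_eq {k : ℕ} (hk : 1 ≤ k) {m : ℝ} (hm : 0 < m) {x : ℝ} (hx : 0 ≤ x) :
    gammaMeasure k m⁻¹ (Set.Iio x)
      = ENNReal.ofReal (1 - Real.exp (-(x/m)) * ∑ l ∈ range k, (x/m)^l / l.factorial) := by
  obtain ⟨n, rfl⟩ : ∃ n, k = n + 1 := ⟨k-1, (Nat.succ_pred_eq_of_pos hk).symm⟩
  set g : ℝ → ℝ := fun t => (m⁻¹)^(n+1) / n.factorial * t^n * Real.exp (-(t/m)) with hgdef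
  have hgcont : Continuous g := by fun_prop
  rw [gammaMeasure, withDensity_apply _ measurableSet_Iio]
  have h0 : ∫⁻ t in Set.Iio 0, gammaPDF (((n+1:ℕ):ℝ)) m⁻¹ t = 0 :=
    lintegral_gammaPDF_of_nonpos le_rfl
  have hdisj : Disjoint (Set.Iio (0:ℝ)) (Set.Ico 0 x) := by
    rw [Set.disjoint_left]; rintro t ht ⟨h, _⟩; exact absurd h (not_le.mpr ht)
  rw [← Set.Iio_union_Ico_eq_Iio hx, lintegral_union measurableSet_Ico hdisj, h0, zero_add]
  have hpdf : ∀ t ∈ Set.Ico (0:ℝ) x, gammaPDF (((n+1:ℕ):ℝ)) m⁻¹ t = ENNReal.ofReal (g t) := by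
    intro t ht
    rw [gammaPDF, gammaPDFReal_nat _ _ ht.1]
    have h4 : -(m⁻¹ * t) = -(t/m) := by field_simp
    rw [h4]
  rw [setLIntegral_congr_fun_ae measurableSet_Ico (ae_of_all _ hpdf)]
  have hnn : 0 ≤ᵐ[volume.restrict (Set.Ico 0 x)] g := by
    refine ae_restrict_of_forall_mem measurableSet_Ico (fun t ht => ?_)
    have := ht.1
    rw [hgdef]
    positivity
  have hint : IntegrableOn g (Set.Ico 0 x) :=
    (hgcont.integrableOn_Icc).mono_set Set.Ico_subset_Icc_self
  rw [← ofReal_integral_eq_lintegral_ofReal hint hnn]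
  congr 1
  have hioc : ∫ t in Set.Ico 0 x, g t = ∫ t in (0:ℝ)..x, g t := by
    rw [intervalIntegral.integral_of_le hx, setIntegral_congr_set MeasureTheory.Ico_ae_eq_Ioc]
  rw [hioc]
  rw [intervalIntegral.integral_eq_sub_of_hasDerivAt
    (f := fun t => -(Real.exp (-(t/m)) * ∑ l ∈ range (n+1), (t/m)^l / l.factorial))
    (fun t _ => erlang_F_hasDerivAt hm t) (hgcont.intervalIntegrable 0 x)]
  have hF0 : (∑ l ∈ range (n+1), ((0:ℝ)/m)^l / l.factorial) = 1 := by
    rw [Finset.sum_eq_single_of_mem 0 (Finset.mem_range.mpr n.succ_pos)]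
    · simp
    · intro l _ hl
      rw [zero_div, zero_pow hl, zero_div]
  rw [hF0]
  simp
  ring

theorem outage_probability_erlang_erlang
    {Ω : Type*} [MeasureSpace Ω] [IsProbabilityMeasure (ℙ : Measure Ω)]
    {k L : ℕ} (hk : 1 ≤ k) (hL : 1 ≤ L) {m μ a b p N₀ γ : ℝ}
    (hm : 0 < m) (hμ : 0 < μ) (ha : 0 < a) (hb : 0 < b) (hp : 0 < p)
    (hN₀ : 0 < N₀) (hγ : 0 < γ)
    (X Z : Ω → ℝ) (hX : Measurable X) (hZ : Measurable Z)
    (hXlaw : Measure.map X ℙ = gammaMeasure k m⁻¹)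
    (hZlaw : Measure.map Z ℙ = gammaMeasure L μ⁻¹)
    (hindep : IndepFun X Z ℙ)
    (u v : ℝ) (hu : u = γ * p / (a * m)) (hv : v = (γ * N₀ + b) / (a * m)) :
    (ℙ {ω | max (a * X ω - b) 0 < γ * (p * Z ω + N₀)}).toReal
      = 1 - Real.exp (-v) * ∑ l ∈ range k, ∑ s ∈ range (l + 1),
          l.choose s * (s + L - 1).factorial * v ^ (l - s) * u ^ s
            / (l.factorial * (L - 1).factorial * μ ^ L * (u + 1 / μ) ^ (s + L)) := by
  obtain ⟨M, rfl⟩ : ∃ M, L = M + 1 := ⟨L-1, (Nat.succ_pred_eq_of_pos hL).symm⟩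
  haveI hprob1 : IsProbabilityMeasure (gammaMeasure ((k:ℝ)) m⁻¹) :=
    isProbabilityMeasure_gammaMeasure (by exact_mod_cast hk) (inv_pos.mpr hm)
  haveI hprob2 : IsProbabilityMeasure (gammaMeasure (((M+1:ℕ):ℝ)) μ⁻¹) :=
    isProbabilityMeasure_gammaMeasure (by positivity) (inv_pos.mpr hμ)
  have hu0 : 0 < u := by rw [hu]; positivity
  have hv0 : 0 < v := by rw [hv]; positivity
  set c : ℝ := u + 1/μ with hcdef
  have hc : 0 < c := by positivity
  set H : ℝ → ℝ := fun z => Real.exp (-(u*z+v)) * ∑ l ∈ range k, (u*z+v)^l / l.factorial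
    with hHdef
  have hHm : Measurable H := by
    apply Measurable.mul
    · exact (((measurable_id'.const_mul u).add_const v).neg).exp
    · exact Finset.measurable_sum _ fun l _ =>
        (((measurable_id'.const_mul u).add_const v).pow_const l).div_const _
  -- joint law
  have hmap : Measure.map (fun ω => (Z ω, X ω)) ℙ
      = (gammaMeasure (((M+1:ℕ):ℝ)) μ⁻¹).prod (gammaMeasure k m⁻¹) := by
    rw [← hZlaw, ← hXlaw]
    exact (indepFun_iff_map_prod_eq_prod_map_map hZ.aemeasurable hX.aemeasurable).mp hindep.symm
  have hSmeas : MeasurableSet {q : ℝ × ℝ | max (a * q.2 - b) 0 < γ * (p * q.1 + N₀)} := by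
    apply measurableSet_lt
    · exact ((measurable_snd.const_mul a).sub_const b).max measurable_const
    · exact ((measurable_fst.const_mul p).add_const N₀).const_mul γ
  have h1 : ℙ {ω | max (a * X ω - b) 0 < γ * (p * Z ω + N₀)}
      = ((gammaMeasure (((M+1:ℕ):ℝ)) μ⁻¹).prod (gammaMeasure k m⁻¹))
          {q : ℝ × ℝ | max (a * q.2 - b) 0 < γ * (p * q.1 + N₀)} := by
    rw [← hmap, Measure.map_apply (hZ.prodMk hX) hSmeas]
    rfl
  rw [h1, Measure.prod_apply hSmeas]
  -- a.e. nonneg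
  have hae : ∀ᵐ z ∂(gammaMeasure (((M+1:ℕ):ℝ)) μ⁻¹), 0 ≤ z := by
    rw [ae_iff]
    have hset : {z : ℝ | ¬ 0 ≤ z} = Set.Iio 0 := by ext z; simp [not_le]
    rw [hset, gammaMeasure, withDensity_apply _ measurableSet_Iio]
    exact lintegral_gammaPDF_of_nonpos le_rfl
  -- slices
  have hslice : ∀ᵐ z ∂(gammaMeasure (((M+1:ℕ):ℝ)) μ⁻¹),
      (gammaMeasure k m⁻¹) (Prod.mk z ⁻¹' {q : ℝ × ℝ | max (a * q.2 - b) 0 < γ * (p * q.1 + N₀)})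
        = ENNReal.ofReal (1 - H z) := by
    filter_upwards [hae] with z hz
    have hcpos : 0 < γ * (p * z + N₀) := by positivity
    have hset : (Prod.mk z ⁻¹' {q : ℝ × ℝ | max (a * q.2 - b) 0 < γ * (p * q.1 + N₀)})
        = Set.Iio ((γ * (p * z + N₀) + b)/a) := by
      ext x
      simp only [Set.mem_preimage, Set.mem_setOf_eq, Set.mem_Iio, max_lt_iff]
      constructor
      · rintro ⟨h1', _⟩
        rw [lt_div_iff₀ ha]
        linarith [h1']
      · intro h
        rw [lt_div_iff₀ ha] at h
        exact ⟨by linarith, hcpos⟩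
    have hwnn : 0 ≤ (γ * (p * z + N₀) + b)/a := by positivity
    rw [hset, gammaMeasure_Iio_eq hk hm hwnn]
    have harg : ((γ * (p * z + N₀) + b)/a)/m = u*z+v := by
      rw [hu, hv]; field_simp; ring
    rw [harg, hHdef]
  rw [lintegral_congr_ae hslice]
  -- bounds on H
  have hH0 : ∀ z : ℝ, 0 ≤ z → 0 ≤ H z := by
    intro z hz
    have hw : 0 ≤ u*z+v := by positivity
    exact mul_nonneg (Real.exp_pos _).le (Finset.sum_nonneg fun l _ =>
      div_nonneg (pow_nonneg hw _) (Nat.cast_nonneg _))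
  have hH1 : ∀ z : ℝ, 0 ≤ z → H z ≤ 1 := by
    intro z hz
    have hw : 0 ≤ u*z+v := by positivity
    calc H z ≤ Real.exp (-(u*z+v)) * Real.exp (u*z+v) :=
          mul_le_mul_of_nonneg_left (Real.sum_le_exp_of_nonneg hw k) (Real.exp_pos _).le
      _ = 1 := by rw [← Real.exp_add, show -(u*z+v) + (u*z+v) = 0 by ring, Real.exp_zero]
  have hofle : ∀ᵐ z ∂(gammaMeasure (((M+1:ℕ):ℝ)) μ⁻¹),
      ENNReal.ofReal (H z) ≤ (fun _ => (1:ENNReal)) z := by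
    filter_upwards [hae] with z hz
    exact ENNReal.ofReal_le_one.mpr (hH1 z hz)
  have hIle : ∫⁻ z, ENNReal.ofReal (H z) ∂(gammaMeasure (((M+1:ℕ):ℝ)) μ⁻¹) ≤ 1 := by
    calc ∫⁻ z, ENNReal.ofReal (H z) ∂(gammaMeasure (((M+1:ℕ):ℝ)) μ⁻¹)
        ≤ ∫⁻ _, 1 ∂(gammaMeasure (((M+1:ℕ):ℝ)) μ⁻¹) := lintegral_mono_ae hofle
      _ = 1 := by rw [lintegral_one, measure_univ]
  have hsub : ∫⁻ z, ENNReal.ofReal (1 - H z) ∂(gammaMeasure (((M+1:ℕ):ℝ)) μ⁻¹)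
      = 1 - ∫⁻ z, ENNReal.ofReal (H z) ∂(gammaMeasure (((M+1:ℕ):ℝ)) μ⁻¹) := by
    have hcongr : ∀ᵐ z ∂(gammaMeasure (((M+1:ℕ):ℝ)) μ⁻¹),
        ENNReal.ofReal (1 - H z) = (fun _ => (1:ENNReal)) z - ENNReal.ofReal (H z) := by
      filter_upwards [hae] with z hz
      rw [ENNReal.ofReal_sub _ (hH0 z hz), ENNReal.ofReal_one]
    rw [lintegral_congr_ae hcongr,
      lintegral_sub hHm.ennreal_ofReal (lt_of_le_of_lt hIle ENNReal.one_lt_top).ne hofle]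
    congr 1
    rw [lintegral_one, measure_univ]
  rw [hsub, ENNReal.toReal_sub_of_le hIle ENNReal.one_ne_top, ENNReal.toReal_one]
  -- compute I
  have hCpos : ∀ l s : ℕ, 0 ≤ (l.choose s : ℝ) * v^(l-s) * u^s * Real.exp (-v)
      * (μ⁻¹)^(M+1) / (M.factorial * l.factorial) := by
    intro l s
    positivity
  set φ : ℝ → ℝ := fun z => ∑ l ∈ range k, ∑ s ∈ range (l+1),
      ((l.choose s : ℝ) * v^(l-s) * u^s * Real.exp (-v) * (μ⁻¹)^(M+1)
        / (M.factorial * l.factorial)) * (z^(s+M) * Real.exp (-(c*z))) with hφdef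
  have hint : ∀ l s : ℕ, IntegrableOn (fun z : ℝ =>
      ((l.choose s : ℝ) * v^(l-s) * u^s * Real.exp (-v) * (μ⁻¹)^(M+1)
        / (M.factorial * l.factorial)) * (z^(s+M) * Real.exp (-(c*z)))) (Set.Ioi 0) :=
    fun l s => (integrableOn_pow_mul_exp_neg_mul hc (s+M)).const_mul _
  have hφint : IntegrableOn φ (Set.Ioi 0) := by
    apply MeasureTheory.integrable_finset_sum
    intro l _
    exact MeasureTheory.integrable_finset_sum _ fun s _ => hint l s
  have hφnn : 0 ≤ᵐ[volume.restrict (Set.Ioi 0)] φ := by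
    refine ae_restrict_of_forall_mem measurableSet_Ioi (fun z hz => ?_)
    have hz' : (0:ℝ) < z := hz
    refine Finset.sum_nonneg fun l _ => Finset.sum_nonneg fun s _ => mul_nonneg (hCpos l s) ?_
    positivity
  have hI : ∫⁻ z, ENNReal.ofReal (H z) ∂(gammaMeasure (((M+1:ℕ):ℝ)) μ⁻¹)
      = ENNReal.ofReal (∫ z in Set.Ioi (0:ℝ), φ z) := by
    have hpm : Measurable (gammaPDF (((M+1:ℕ):ℝ)) μ⁻¹) :=
      (measurable_gammaPDFReal _ _).ennreal_ofReal
    rw [gammaMeasure, lintegral_withDensity_eq_lintegral_mul _ hpm hHm.ennreal_ofReal]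
    have hzero : ∫⁻ z in Set.Iio 0,
        (gammaPDF (((M+1:ℕ):ℝ)) μ⁻¹ * fun z => ENNReal.ofReal (H z)) z = 0 := by
      rw [setLIntegral_congr_fun_ae measurableSet_Iio
        (ae_of_all _ (fun z (hz : z < 0) => ?_)), lintegral_zero]
      simp only [Pi.mul_apply]
      rw [gammaPDF_of_neg hz, zero_mul]
    have hsplit := lintegral_add_compl (μ := volume)
      (gammaPDF (((M+1:ℕ):ℝ)) μ⁻¹ * fun z => ENNReal.ofReal (H z))
      (measurableSet_Ici (a := (0:ℝ)))
    rw [Set.compl_Ici, hzero, add_zero] at hsplit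
    rw [← hsplit, setLIntegral_congr (MeasureTheory.Ioi_ae_eq_Ici (a := (0:ℝ))).symm]
    rw [ofReal_integral_eq_lintegral_ofReal hφint hφnn]
    refine setLIntegral_congr_fun_ae measurableSet_Ioi (ae_of_all _ (fun z hz => ?_))
    have hz' : (0:ℝ) < z := hz
    simp only [Pi.mul_apply]
    rw [gammaPDF, gammaPDFReal_nat _ _ hz'.le, ← ENNReal.ofReal_mul (by positivity)]
    congr 1
    -- pointwise identity
    rw [hHdef, hφdef]
    simp only []
    have h5 : Real.exp (-(u*z+v)) = Real.exp (-(u*z)) * Real.exp (-v) := by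
      rw [← Real.exp_add]; ring_nf
    have h6 : Real.exp (-(c*z)) = Real.exp (-(u*z)) * Real.exp (-(μ⁻¹*z)) := by
      rw [← Real.exp_add]; congr 1; rw [hcdef]; field_simp; ring
    simp only [Finset.mul_sum]
    refine Finset.sum_congr rfl (fun l _ => ?_)
    rw [add_pow, Finset.sum_div]
    simp only [Finset.mul_sum]
    refine Finset.sum_congr rfl (fun s _ => ?_)
    rw [h5, h6, mul_pow, pow_add]
    have hfM : (M.factorial : ℝ) ≠ 0 := by positivity
    have hfl : (l.factorial : ℝ) ≠ 0 := by positivity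
    field_simp
    ring
  rw [hI]
  have hTnn : 0 ≤ ∫ z in Set.Ioi (0:ℝ), φ z :=
    MeasureTheory.integral_nonneg_of_ae hφnn
  rw [ENNReal.toReal_ofReal hTnn]
  -- evaluate the integral
  have hval : ∫ z in Set.Ioi (0:ℝ), φ z
      = ∑ l ∈ range k, ∑ s ∈ range (l+1),
        ((l.choose s : ℝ) * v^(l-s) * u^s * Real.exp (-v) * (μ⁻¹)^(M+1)
          / (M.factorial * l.factorial)) * ((s+M).factorial / c^(s+M+1)) := by
    rw [hφdef, MeasureTheory.integral_finset_sum _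
      (fun l _ => MeasureTheory.integrable_finset_sum _ fun s _ => hint l s)]
    refine Finset.sum_congr rfl (fun l _ => ?_)
    rw [MeasureTheory.integral_finset_sum _ (fun s _ => hint l s)]
    refine Finset.sum_congr rfl (fun s _ => ?_)
    rw [MeasureTheory.integral_const_mul, integral_pow_mul_exp_neg_mul hc (s+M)]
  rw [hval]
  -- final algebra
  congr 1
  rw [Finset.mul_sum]
  refine Finset.sum_congr rfl (fun l _ => ?_)
  rw [Finset.mul_sum]
  refine Finset.sum_congr rfl (fun s _ => ?_)
  have e1 : s + (M+1) - 1 = s + M := by omega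
  have e2 : (M+1) - 1 = M := by omega
  have e3 : s + (M+1) = s + M + 1 := by omega
  rw [e1, e2, e3]
  have hfM : (M.factorial : ℝ) ≠ 0 := by positivity
  have hfl : (l.factorial : ℝ) ≠ 0 := by positivity
  have hfsM : ((s+M).factorial : ℝ) ≠ 0 := by positivity
  have hcne : c ≠ 0 := hc.ne'
  have hμne : μ ≠ 0 := hμ.ne'
  simp only [inv_pow]
  field_simp
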